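/- Let U be a 𝔟-module which is finitely generated as a U(𝔫)-module and all of whose elements are 𝔞-finite. Then the canonical map U → lim_k U/𝔫^kU is injective, and its image is exactly the set of 𝔞-finite elements of lim_k U/𝔫^kU (each 𝔫^kU is 𝔞-stable, so the inverse limit carries a natural 𝔞-action); that is, the Jacquet module J(U), defined as the 𝔞-finite part of the completion lim_k U/𝔫^kU, equals U. -/

import Mathlib

set_option maxHeartbeats 1000000
set_option synthInstance.maxHeartbeats 400000

namespace Jb

variable (b : Type*) [LieRing b] [LieAlgebra ℂ b] [FiniteDimensional ℂ b]
variable (a n : LieSubalgebra ℂ b)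

/-- The `𝔞`-weight space `𝔫_α = {X ∈ 𝔫 : [H,X] = α(H)·X for all H ∈ 𝔞}`,
regarded as a subspace of `𝔟`. -/
def wtSpace (α : Module.Dual ℂ a) : Submodule ℂ b where
  carrier := {X | X ∈ n ∧ ∀ H : a, ⁅(H : b), X⁆ = α H • X}
  zero_mem' := ⟨n.zero_mem, fun H => by simp⟩
  add_mem' := fun {X Y} hX hY => ⟨n.add_mem hX.1 hY.1, fun H => by
    rw [lie_add, hX.2 H, hY.2 H, smul_add]⟩
  smul_mem' := fun c X hX => ⟨n.smul_mem c hX.1, fun H => by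
    rw [lie_smul, hX.2 H, smul_comm]⟩

section ModuleU

variable (U : Type*) [AddCommGroup U] [Module ℂ U]
  [LieRingModule b U] [LieModule ℂ b U]

/-- The subspace `𝔫^k·U` of a `𝔟`-module `U`. -/
def nPowU : ℕ → Submodule ℂ U
  | 0 => ⊤
  | k + 1 => Submodule.span ℂ
      {z | ∃ x ∈ n, ∃ u ∈ nPowU k, z = ⁅x, u⁆}

lemma nPowU_succ_le : ∀ k, nPowU b n U (k + 1) ≤ nPowU b n U k
  | 0 => le_top
  | k + 1 => Submodule.span_le.2 fun z hz => by
      obtain ⟨x, hx, u, hu, rfl⟩ := hz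
      exact Submodule.subset_span ⟨x, hx, u, nPowU_succ_le k hu, rfl⟩

/-- The generalized weight space `U_μ` of the `𝔞`-action on `U`,
for `μ ∈ 𝔞* = Hom_ℂ(𝔞, ℂ)`. -/
def genWt (μ : Module.Dual ℂ a) : Submodule ℂ U :=
  ⨅ H : a, Module.End.maxGenEigenspace (LieModule.toEnd ℂ b U (H : b)) (μ H)

/-- The set of `𝔞`-finite elements of `U`: the elements lying in some
finite-dimensional `𝔞`-stable subspace. -/
def aFinite : Set U :=
  {u | ∃ N : Submodule ℂ U, u ∈ N ∧ FiniteDimensional ℂ N ∧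
    ∀ H : a, ∀ v ∈ N, ⁅(H : b), v⁆ ∈ N}

/-- `U` is finitely generated as a `U(𝔫)`-module: there is a finite subset `S` of `U`
such that the smallest `𝔫`-stable subspace of `U` containing `S` is all of `U`. -/
def FGOverN : Prop :=
  ∃ S : Finset U, ∀ N : Submodule ℂ U, (↑S : Set U) ⊆ N →
    (∀ x ∈ n, ∀ u ∈ N, ⁅x, u⁆ ∈ N) → N = ⊤

/-- The transition map `U/𝔫^{k+1}U → U/𝔫^kU`. -/
def transU (k : ℕ) : (U ⧸ nPowU b n U (k + 1)) →ₗ[ℂ] U ⧸ nPowU b n U k :=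
  Submodule.mapQ _ _ LinearMap.id
    (fun u hu => by simpa using nPowU_succ_le b n U k hu)

/-- `lim_k U/𝔫^kU`: the space of compatible families. -/
def limU : Submodule ℂ (∀ k, U ⧸ nPowU b n U k) where
  carrier := {f | ∀ k, transU b n U k (f (k + 1)) = f k}
  zero_mem' := fun k => map_zero _
  add_mem' := fun {f g} hf hg k => by
    simp only [Pi.add_apply, map_add, hf k, hg k]
  smul_mem' := fun c f hf k => by
    simp only [Pi.smul_apply, map_smul, hf k]

/-- The set `S_k = {μ : U_μ ≠ 0 and U_μ ⊄ 𝔫^kU}`. -/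
def Sk (k : ℕ) : Set (Module.Dual ℂ a) :=
  {μ | genWt b a U μ ≠ ⊥ ∧ ¬ genWt b a U μ ≤ nPowU b n U k}

/-- The canonical map `U → lim_k U/𝔫^kU`. -/
def canU (u : U) : limU b n U :=
  ⟨fun _ => Submodule.Quotient.mk u, fun _ => rfl⟩

end ModuleU


section Action

variable (U : Type*) [AddCommGroup U] [Module ℂ U]
  [LieRingModule b U] [LieModule ℂ b U]

lemma nPowU_lie_stable (hideal : ∀ x : b, ∀ y ∈ n, ⁅x, y⁆ ∈ n) (k : ℕ) :
    ∀ (x : b) {u : U}, u ∈ nPowU b n U k → ⁅x, u⁆ ∈ nPowU b n U k := by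
  induction k with
  | zero => intro x u _; exact Submodule.mem_top
  | succ k ih =>
    intro x u hu
    induction hu using Submodule.span_induction with
    | mem z hz =>
      obtain ⟨y, hy, v, hv, rfl⟩ := hz
      have h1 : ⁅⁅x, y⁆, v⁆ ∈ nPowU b n U (k + 1) :=
        Submodule.subset_span ⟨_, hideal x y hy, v, hv, rfl⟩
      have h2 : ⁅y, ⁅x, v⁆⁆ ∈ nPowU b n U (k + 1) :=
        Submodule.subset_span ⟨y, hy, _, ih x hv, rfl⟩
      have h3 : ⁅x, ⁅y, v⁆⁆ = ⁅⁅x, y⁆, v⁆ + ⁅y, ⁅x, v⁆⁆ := by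
        rw [leibniz_lie]
      rw [h3]
      exact Submodule.add_mem _ h1 h2
    | zero => rw [lie_zero]; exact Submodule.zero_mem _
    | add u v _ _ hu hv => rw [lie_add]; exact Submodule.add_mem _ hu hv
    | smul c u _ hu => rw [lie_smul]; exact Submodule.smul_mem _ _ hu

/-- The endomorphism of `U/𝔫^kU` induced by the action of `x ∈ 𝔟` on `U`
(each `𝔫^kU` is stable since `𝔫` is an ideal). -/
def actQk (hideal : ∀ x : b, ∀ y ∈ n, ⁅x, y⁆ ∈ n) (x : b) (k : ℕ) :
    (U ⧸ nPowU b n U k) →ₗ[ℂ] U ⧸ nPowU b n U k :=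
  Submodule.mapQ _ _ (LieModule.toEnd ℂ b U x)
    (fun u hu => by simpa using nPowU_lie_stable b n U hideal k x hu)

lemma actQk_trans (hideal : ∀ x : b, ∀ y ∈ n, ⁅x, y⁆ ∈ n) (x : b) (k : ℕ)
    (y : U ⧸ nPowU b n U (k + 1)) :
    transU b n U k (actQk b n U hideal x (k + 1) y)
      = actQk b n U hideal x k (transU b n U k y) := by
  obtain ⟨u, rfl⟩ := Submodule.Quotient.mk_surjective _ y
  simp [transU, actQk, Submodule.mapQ_apply]

/-- The natural action of `H ∈ 𝔞` on `lim_k U/𝔫^kU`. -/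
def actLim (hideal : ∀ x : b, ∀ y ∈ n, ⁅x, y⁆ ∈ n) (H : a) :
    limU b n U →ₗ[ℂ] limU b n U where
  toFun f := ⟨fun k => actQk b n U hideal (H : b) k (f.val k), fun k => by
    rw [actQk_trans b n U hideal (H : b) k, f.2 k]⟩
  map_add' f g := Subtype.ext (funext fun k => by
    simp only [Submodule.coe_add, Pi.add_apply, map_add])
  map_smul' c f := Subtype.ext (funext fun k => by
    simp only [SetLike.val_smul, Pi.smul_apply, map_smul, RingHom.id_apply])

end Action

end Jb

section Aux

open Jb

variable {b : Type*} [LieRing b] [LieAlgebra ℂ b] [FiniteDimensional ℂ b]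
variable {a n : LieSubalgebra ℂ b}
variable {U : Type*} [AddCommGroup U] [Module ℂ U] [LieRingModule b U] [LieModule ℂ b U]

lemma pow_shift {V W : Type*} [AddCommGroup V] [Module ℂ V] [AddCommGroup W] [Module ℂ W]
    (ψ : V →ₗ[ℂ] W) (A : Module.End ℂ V) (B : Module.End ℂ W) (c d : ℂ)
    (h : ∀ v, B (ψ v) = d • ψ v + ψ (A v)) :
    ∀ (k : ℕ) (v : V), ((B - (c + d) • (1 : Module.End ℂ W)) ^ k) (ψ v)
      = ψ (((A - c • (1 : Module.End ℂ V)) ^ k) v) := by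
  have h1 : ∀ v, (B - (c + d) • (1 : Module.End ℂ W)) (ψ v)
      = ψ ((A - c • (1 : Module.End ℂ V)) v) := by
    intro v
    have e1 : (B - (c + d) • (1 : Module.End ℂ W)) (ψ v) = B (ψ v) - (c + d) • ψ v := by
      simp [LinearMap.sub_apply]
    have e2 : (A - c • (1 : Module.End ℂ V)) v = A v - c • v := by
      simp [LinearMap.sub_apply]
    rw [e1, e2, h v, map_sub, map_smul, add_smul]
    abel
  intro k
  induction k with
  | zero => intro v; simp
  | succ k ih =>
    intro v
    rw [pow_succ, Module.End.mul_apply, h1, ih ((A - c • (1 : Module.End ℂ V)) v),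
      ← Module.End.mul_apply, ← pow_succ]

lemma maxGen_shift {V W : Type*} [AddCommGroup V] [Module ℂ V] [AddCommGroup W] [Module ℂ W]
    (ψ : V →ₗ[ℂ] W) (A : Module.End ℂ V) (B : Module.End ℂ W) (c d : ℂ)
    (h : ∀ v, B (ψ v) = d • ψ v + ψ (A v)) {v : V}
    (hv : v ∈ A.maxGenEigenspace c) : ψ v ∈ B.maxGenEigenspace (c + d) := by
  rw [Module.End.mem_maxGenEigenspace] at hv ⊢
  obtain ⟨k, hk⟩ := hv
  exact ⟨k, by rw [pow_shift ψ A B c d h k v, hk, map_zero]⟩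

/-- Simultaneous generalized weight space of a family of endomorphisms indexed by `a`. -/
def genWtF {V : Type*} [AddCommGroup V] [Module ℂ V] (T : a → Module.End ℂ V) (χ : a → ℂ) :
    Submodule ℂ V :=
  ⨅ H : a, (T H).maxGenEigenspace (χ H)

lemma genWtF_shift {V W : Type*} [AddCommGroup V] [Module ℂ V] [AddCommGroup W] [Module ℂ W]
    (T : a → Module.End ℂ V) (T' : a → Module.End ℂ W) (ψ : V →ₗ[ℂ] W) (d : a → ℂ)
    (h : ∀ H v, T' H (ψ v) = d H • ψ v + ψ (T H v)) (χ : a → ℂ) {v : V}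
    (hv : v ∈ genWtF T χ) : ψ v ∈ genWtF T' (χ + d) := by
  rw [genWtF, Submodule.mem_iInf] at hv ⊢
  intro H
  exact maxGen_shift ψ (T H) (T' H) (χ H) (d H) (h H) (hv H)

lemma genWtF_map {V W : Type*} [AddCommGroup V] [Module ℂ V] [AddCommGroup W] [Module ℂ W]
    (T : a → Module.End ℂ V) (T' : a → Module.End ℂ W) (ψ : V →ₗ[ℂ] W)
    (h : ∀ H v, T' H (ψ v) = ψ (T H v)) (χ : a → ℂ) {v : V}
    (hv : v ∈ genWtF T χ) : ψ v ∈ genWtF T' χ := by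
  have := genWtF_shift T T' ψ 0
    (fun H v => by rw [Pi.zero_apply, zero_smul, zero_add]; exact h H v) χ hv
  simpa using this

variable (a U) in
/-- The endomorphisms of `U` given by the action of `a`. -/
def TU : a → Module.End ℂ U := fun H => LieModule.toEnd ℂ b U (H : b)

variable (a U) in
/-- Generalized weight space of `U` for `χ : a → ℂ`. -/
def GWU (χ : a → ℂ) : Submodule ℂ U := genWtF (TU a U) χ

lemma actQk_mk (hideal : ∀ x : b, ∀ y ∈ n, ⁅x, y⁆ ∈ n) (x : b) (k : ℕ) (u : U) :
    actQk b n U hideal x k (Submodule.Quotient.mk u) = Submodule.Quotient.mk ⁅x, u⁆ := by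
  simp [actQk, Submodule.mapQ_apply, LieModule.toEnd_apply_apply]

lemma actQk_add' (hideal : ∀ x : b, ∀ y ∈ n, ⁅x, y⁆ ∈ n) (x y : b) (k : ℕ)
    (q : U ⧸ nPowU b n U k) :
    actQk b n U hideal (x + y) k q = actQk b n U hideal x k q + actQk b n U hideal y k q := by
  obtain ⟨u, rfl⟩ := Submodule.Quotient.mk_surjective _ q
  rw [actQk_mk, actQk_mk, actQk_mk, add_lie, Submodule.Quotient.mk_add]

lemma actQk_smul' (hideal : ∀ x : b, ∀ y ∈ n, ⁅x, y⁆ ∈ n) (c : ℂ) (x : b) (k : ℕ)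
    (q : U ⧸ nPowU b n U k) :
    actQk b n U hideal (c • x) k q = c • actQk b n U hideal x k q := by
  obtain ⟨u, rfl⟩ := Submodule.Quotient.mk_surjective _ q
  rw [actQk_mk, actQk_mk, smul_lie, Submodule.Quotient.mk_smul]

lemma actQk_leibniz (hideal : ∀ x : b, ∀ y ∈ n, ⁅x, y⁆ ∈ n) (x y : b) (k : ℕ)
    (q : U ⧸ nPowU b n U k) :
    actQk b n U hideal x k (actQk b n U hideal y k q)
      = actQk b n U hideal ⁅x, y⁆ k q + actQk b n U hideal y k (actQk b n U hideal x k q) := by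
  obtain ⟨u, rfl⟩ := Submodule.Quotient.mk_surjective _ q
  rw [actQk_mk, actQk_mk, actQk_mk, actQk_mk, actQk_mk, ← Submodule.Quotient.mk_add,
    ← leibniz_lie]

variable (b a n U) in
/-- The `a`-module structure on `U/𝔫^kU`. -/
def quotLRM (hideal : ∀ x : b, ∀ y ∈ n, ⁅x, y⁆ ∈ n) (k : ℕ) :
    LieRingModule a (U ⧸ nPowU b n U k) where
  bracket H q := actQk b n U hideal (H : b) k q
  add_lie H H' q := by
    show actQk b n U hideal ((H : b) + (H' : b)) k q
      = actQk b n U hideal (H : b) k q + actQk b n U hideal (H' : b) k q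
    rw [actQk_add']
  lie_add H q q' := map_add _ _ _
  leibniz_lie H H' q := by
    show actQk b n U hideal (H : b) k (actQk b n U hideal (H' : b) k q)
      = actQk b n U hideal ⁅(H : b), (H' : b)⁆ k q
        + actQk b n U hideal (H' : b) k (actQk b n U hideal (H : b) k q)
    rw [actQk_leibniz]

variable (b a n U) in
def quotLM (hideal : ∀ x : b, ∀ y ∈ n, ⁅x, y⁆ ∈ n) (k : ℕ) :
    @LieModule ℂ a (U ⧸ nPowU b n U k) _ _ _ _ _ (quotLRM b a n U hideal k) :=
  letI := quotLRM b a n U hideal k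
  { smul_lie := fun c H q => by
      show actQk b n U hideal ((c • H : a) : b) k q = c • actQk b n U hideal (H : b) k q
      rw [show ((c • H : a) : b) = c • (H : b) from rfl, actQk_smul']
    lie_smul := fun c H q => map_smul _ _ _ }

variable (b a n U) in
/-- The `a`-module structure on `lim_k U/𝔫^kU`. -/
def limLRM (hideal : ∀ x : b, ∀ y ∈ n, ⁅x, y⁆ ∈ n) :
    LieRingModule a ↥(limU b n U) where
  bracket H f := actLim b a n U hideal H f
  add_lie H H' f := Subtype.ext (funext fun k => by
    show actQk b n U hideal ((H : b) + (H' : b)) k (f.val k)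
      = actQk b n U hideal (H : b) k (f.val k) + actQk b n U hideal (H' : b) k (f.val k)
    rw [actQk_add'])
  lie_add H f f' := map_add _ _ _
  leibniz_lie H H' f := Subtype.ext (funext fun k => by
    show actQk b n U hideal (H : b) k (actQk b n U hideal (H' : b) k (f.val k))
      = actQk b n U hideal ⁅(H : b), (H' : b)⁆ k (f.val k)
        + actQk b n U hideal (H' : b) k (actQk b n U hideal (H : b) k (f.val k))
    rw [actQk_leibniz])

variable (b a n U) in
def limLM (hideal : ∀ x : b, ∀ y ∈ n, ⁅x, y⁆ ∈ n) :
    @LieModule ℂ a ↥(limU b n U) _ _ _ _ _ (limLRM b a n U hideal) :=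
  letI := limLRM b a n U hideal
  { smul_lie := fun c H f => Subtype.ext (funext fun k => by
      show actQk b n U hideal ((c • H : a) : b) k (f.val k)
        = c • actQk b n U hideal (H : b) k (f.val k)
      rw [show ((c • H : a) : b) = c • (H : b) from rfl, actQk_smul'])
    lie_smul := fun c H f => map_smul _ _ _ }

lemma coe_genWeightSpace' {V : Type*} [AddCommGroup V] [Module ℂ V] [LieRingModule a V]
    [LieModule ℂ a V] [LieRing.IsNilpotent a] (χ : a → ℂ) :
    (LieModule.genWeightSpace V χ : Submodule ℂ V)
      = genWtF (fun H : a => LieModule.toEnd ℂ a V H) χ := by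
  rw [LieModule.genWeightSpace, LieSubmodule.iInf_toSubmodule]
  rfl

lemma genWtF_indep' {V : Type*} [AddCommGroup V] [Module ℂ V] [LieRingModule a V]
    [LieModule ℂ a V] [LieRing.IsNilpotent a] :
    iSupIndep (fun χ : a → ℂ => genWtF (fun H : a => LieModule.toEnd ℂ a V H) χ) := by
  have h := LieModule.iSupIndep_genWeightSpace ℂ a V
  rw [← LieSubmodule.iSupIndep_toSubmodule] at h
  simpa only [coe_genWeightSpace'] using h

lemma genWtF_top' {V : Type*} [AddCommGroup V] [Module ℂ V] [LieRingModule a V]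
    [LieModule ℂ a V] [LieRing.IsNilpotent a] [FiniteDimensional ℂ V] :
    (⊤ : Submodule ℂ V) ≤ ⨆ χ : a → ℂ, genWtF (fun H : a => LieModule.toEnd ℂ a V H) χ := by
  have h := LieModule.iSup_genWeightSpace_eq_top ℂ a V
  have h2 := congrArg (fun N : LieSubmodule ℂ a V => (N : Submodule ℂ V)) h
  simp only [LieSubmodule.iSup_toSubmodule, LieSubmodule.top_toSubmodule,
    coe_genWeightSpace'] at h2
  exact h2.ge

lemma toEnd_eq_TU (H : a) : LieModule.toEnd ℂ a U H = TU a U H := by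
  ext u; rfl

lemma GWU_indep (hab : IsLieAbelian a) : iSupIndep (GWU a U) := by
  haveI := hab
  have h := genWtF_indep' (a := a) (V := U)
  have he : (fun H : a => LieModule.toEnd ℂ a U H) = TU a U := funext toEnd_eq_TU
  rw [he] at h
  exact h

lemma F1 (hab : IsLieAbelian a) (hafin : ∀ u : U, u ∈ aFinite b a U) :
    (⊤ : Submodule ℂ U) ≤ ⨆ χ : a → ℂ, GWU a U χ := by
  haveI := hab
  intro u _
  obtain ⟨N, huN, hfd, hstab⟩ := hafin u
  let N' : LieSubmodule ℂ a U := { toSubmodule := N, lie_mem := fun {H v} hv => hstab H v hv }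
  haveI : FiniteDimensional ℂ ↥N' := hfd
  have h2 := genWtF_top' (a := a) (V := ↥N') (Submodule.mem_top (x := (⟨u, huN⟩ : ↥N')))
  have hmain := Submodule.iSup_induction
    (motive := fun x : ↥N' => (x : U) ∈ ⨆ χ : a → ℂ, GWU a U χ) _ h2
    (fun χ x hx => Submodule.mem_iSup_of_mem χ
      (genWtF_map (fun H : a => LieModule.toEnd ℂ a ↥N' H) (TU a U)
        (N'.toSubmodule.subtype) (fun H v => rfl) χ hx))
    (by simpa using Submodule.zero_mem _)
    (fun x y hx hy => by exact Submodule.add_mem _ hx hy)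
  exact hmain

lemma wt_shift (α : Module.Dual ℂ a) {x : b} (hx : x ∈ wtSpace b a n α) (χ : a → ℂ) {v : U}
    (hv : v ∈ GWU a U χ) : ⁅x, v⁆ ∈ GWU a U (χ + fun H => α H) := by
  refine genWtF_shift (TU a U) (TU a U) (LieModule.toEnd ℂ b U x) (fun H => α H) ?_ χ hv
  intro H v
  show ⁅(H : b), ⁅x, v⁆⁆ = α H • ⁅x, v⁆ + ⁅x, ⁅(H : b), v⁆⁆
  rw [leibniz_lie, hx.2 H, smul_lie]

variable (a U) in
/-- The sum of the weight spaces with weight `χ` satisfying `t ≤ Re χ(H₀)`. -/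
def Mt (H₀ : a) (t : ℝ) : Submodule ℂ U :=
  ⨆ χ ∈ {χ : a → ℂ | t ≤ (χ H₀).re}, GWU a U χ

lemma Mt_mono (H₀ : a) {s t : ℝ} (h : s ≤ t) : Mt a U H₀ t ≤ Mt a U H₀ s :=
  biSup_mono fun χ hχ => le_trans h hχ

lemma GWU_le_Mt (H₀ : a) {χ : a → ℂ} {t : ℝ} (h : t ≤ (χ H₀).re) :
    GWU a U χ ≤ Mt a U H₀ t :=
  le_iSup₂ (f := fun (χ : a → ℂ) (_ : χ ∈ {χ : a → ℂ | t ≤ (χ H₀).re}) => GWU a U χ) χ h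

lemma lie_Mt (H₀ : a) (Φ : Finset (Module.Dual ℂ a))
    (hwtsup : n.toSubmodule = ⨆ α ∈ Φ, wtSpace b a n α)
    (c : ℝ) (hc : ∀ α ∈ Φ, c ≤ ((α : Module.Dual ℂ a) H₀).re)
    (t : ℝ) : ∀ x ∈ n, ∀ v ∈ Mt a U H₀ t, ⁅x, v⁆ ∈ Mt a U H₀ (t + c) := by
  intro x hx
  have hx' : x ∈ ⨆ α ∈ Φ, wtSpace b a n α := by
    rw [← hwtsup]; exact hx
  refine Submodule.iSup_induction
    (motive := fun x : b => ∀ v ∈ Mt a U H₀ t, ⁅x, v⁆ ∈ Mt a U H₀ (t + c)) _ hx' ?_ ?_ ?_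
  · intro α x hxα
    by_cases hα : α ∈ Φ
    · rw [iSup_pos hα] at hxα
      intro v hv
      refine Submodule.iSup_induction
        (motive := fun v : U => ⁅x, v⁆ ∈ Mt a U H₀ (t + c)) _ hv ?_ (by simp) ?_
      · intro χ v hvχ
        by_cases hχ : χ ∈ {χ : a → ℂ | t ≤ (χ H₀).re}
        · rw [iSup_pos hχ] at hvχ
          refine GWU_le_Mt H₀ ?_ (wt_shift α hxα χ hvχ)
          show t + c ≤ (((χ + fun H => α H)) H₀).re
          rw [Pi.add_apply, Complex.add_re]
          exact add_le_add hχ (hc α hα)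
        · rw [iSup_neg hχ] at hvχ
          rw [(Submodule.mem_bot ℂ).mp hvχ, lie_zero]
          exact Submodule.zero_mem _
      · intro v w hv hw
        rw [lie_add]; exact Submodule.add_mem _ hv hw
    · rw [iSup_neg hα] at hxα
      rw [(Submodule.mem_bot ℂ).mp hxα]
      intro v hv
      rw [zero_lie]; exact Submodule.zero_mem _
  · intro v hv; rw [zero_lie]; exact Submodule.zero_mem _
  · intro x y hx hy v hv
    rw [add_lie]; exact Submodule.add_mem _ (hx v hv) (hy v hv)

lemma exists_m (hab : IsLieAbelian a) (H₀ : a) (Φ : Finset (Module.Dual ℂ a))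
    (hwtsup : n.toSubmodule = ⨆ α ∈ Φ, wtSpace b a n α)
    (hc0 : ∀ α ∈ Φ, (0 : ℝ) ≤ ((α : Module.Dual ℂ a) H₀).re)
    (hfg : FGOverN b n U) (hafin : ∀ u : U, u ∈ aFinite b a U) :
    ∃ m : ℝ, (⊤ : Submodule ℂ U) ≤ Mt a U H₀ m := by
  haveI := hab
  obtain ⟨S, hS⟩ := hfg
  classical
  let f : U → Submodule ℂ U := fun s => (hafin s).choose
  have hf_mem : ∀ s : U, s ∈ f s := fun s => (hafin s).choose_spec.1
  have hf_fd : ∀ s : U, FiniteDimensional ℂ ↥(f s) := fun s => (hafin s).choose_spec.2.1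
  have hf_st : ∀ s : U, ∀ H : a, ∀ v ∈ f s, ⁅(H : b), v⁆ ∈ f s :=
    fun s => (hafin s).choose_spec.2.2
  let W : Submodule ℂ U := S.sup f
  haveI : ∀ s : U, FiniteDimensional ℂ ↥(f s) := hf_fd
  haveI hWfd : FiniteDimensional ℂ ↥W := Submodule.finiteDimensional_finset_sup S f
  have hWstab : ∀ H : a, ∀ v ∈ W, ⁅(H : b), v⁆ ∈ W := by
    intro H v hv
    rw [show W = S.sup f from rfl, Finset.sup_eq_iSup] at hv ⊢
    refine Submodule.iSup_induction
      (motive := fun v : U => ⁅(H : b), v⁆ ∈ ⨆ s ∈ S, f s) _ hv ?_ (by simp) ?_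
    · intro s v hvs
      by_cases hsS : s ∈ S
      · rw [iSup_pos hsS] at hvs
        exact Submodule.mem_iSup_of_mem s (Submodule.mem_iSup_of_mem hsS (hf_st s H v hvs))
      · rw [iSup_neg hsS] at hvs
        rw [(Submodule.mem_bot ℂ).mp hvs, lie_zero]; exact Submodule.zero_mem _
    · intro v w hv hw; rw [lie_add]; exact Submodule.add_mem _ hv hw
  let W' : LieSubmodule ℂ a U := { toSubmodule := W, lie_mem := fun {H v} hv => hWstab H v hv }
  haveI : FiniteDimensional ℂ ↥W' := hWfd
  have hfin : {χ : a → ℂ | LieModule.genWeightSpace ↥W' χ ≠ ⊥}.Finite :=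
    LieModule.finite_genWeightSpace_ne_bot ℂ a ↥W'
  let F : Finset ℝ := hfin.toFinset.image fun χ => (χ H₀).re
  let m : ℝ := if hF : F.Nonempty then F.min' hF else 0
  refine ⟨m, ?_⟩
  have hW : W ≤ Mt a U H₀ m := by
    intro w hw
    have h2 := genWtF_top' (a := a) (V := ↥W') (Submodule.mem_top (x := (⟨w, hw⟩ : ↥W')))
    refine Submodule.iSup_induction
      (motive := fun x : ↥W' => (x : U) ∈ Mt a U H₀ m) _ h2 ?_
      (by simpa using Submodule.zero_mem _)
      (fun x y hx hy => by exact Submodule.add_mem _ hx hy)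
    intro χ x hx
    by_cases hbot : LieModule.genWeightSpace ↥W' χ = ⊥
    · have hx0 : x = 0 := by
        rw [← SetLike.mem_coe, ← coe_genWeightSpace'] at hx
        · rw [hbot] at hx
          simpa using hx
      rw [hx0]; simpa using Submodule.zero_mem _
    · have hmF : (χ H₀).re ∈ F := Finset.mem_image_of_mem _ (hfin.mem_toFinset.mpr hbot)
      have hne : F.Nonempty := ⟨_, hmF⟩
      have hm : m ≤ (χ H₀).re := by
        rw [show m = if hF : F.Nonempty then F.min' hF else 0 from rfl, dif_pos hne]
        exact F.min'_le _ hmF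
      refine GWU_le_Mt H₀ hm ?_
      exact genWtF_map (fun H : a => LieModule.toEnd ℂ a ↥W' H) (TU a U)
        (W'.toSubmodule.subtype) (fun H v => rfl) χ hx
  let nW : ℕ → Submodule ℂ U := fun j =>
    Nat.rec W (fun _ prev => Submodule.span ℂ {z | ∃ x ∈ n, ∃ u ∈ prev, z = ⁅x, u⁆}) j
  have hnW_le : ∀ j, nW j ≤ Mt a U H₀ m := by
    intro j; induction j with
    | zero => exact hW
    | succ j ih =>
      refine Submodule.span_le.mpr ?_
      rintro z ⟨x, hx, u, hu, rfl⟩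
      have h := lie_Mt H₀ Φ hwtsup 0 hc0 m x hx u (ih hu)
      rw [add_zero] at h
      exact h
  have htop : (⊤ : Submodule ℂ U) = ⨆ j, nW j := by
    refine (hS _ ?_ ?_).symm
    · intro s hs
      exact Submodule.mem_iSup_of_mem 0 ((Finset.le_sup hs : f s ≤ W) (hf_mem s))
    · intro x hx u hu
      refine Submodule.iSup_induction
        (motive := fun u : U => ⁅x, u⁆ ∈ ⨆ j, nW j) _ hu ?_ (by simp) ?_
      · intro j u hu
        exact Submodule.mem_iSup_of_mem (j + 1) (Submodule.subset_span ⟨x, hx, u, hu, rfl⟩)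
      · intro u v hu hv; rw [lie_add]; exact Submodule.add_mem _ hu hv
  rw [htop]
  exact iSup_le hnW_le

lemma Pk_le_Mt (H₀ : a) (Φ : Finset (Module.Dual ℂ a))
    (hwtsup : n.toSubmodule = ⨆ α ∈ Φ, wtSpace b a n α)
    (c : ℝ) (hc : ∀ α ∈ Φ, c ≤ ((α : Module.Dual ℂ a) H₀).re)
    (m : ℝ) (hm : (⊤ : Submodule ℂ U) ≤ Mt a U H₀ m) :
    ∀ k : ℕ, nPowU b n U k ≤ Mt a U H₀ (m + k * c) := by
  intro k; induction k with
  | zero =>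
    rw [show m + ((0 : ℕ) : ℝ) * c = m by push_cast; ring]
    exact le_trans le_top hm
  | succ k ih =>
    refine Submodule.span_le.mpr ?_
    rintro z ⟨x, hx, u, hu, rfl⟩
    have h := lie_Mt H₀ Φ hwtsup c hc (m + k * c) x hx u (ih hu)
    have he : m + ((k : ℕ) + 1 : ℕ) * c = m + (k : ℝ) * c + c := by push_cast; ring
    rw [show ((k + 1 : ℕ) : ℝ) * c = (k : ℝ) * c + c by push_cast; ring]
    rw [← add_assoc]
    exact h

lemma disj_biSup {ι : Type*} {β : Type*} [CompleteLattice β] [IsModularLattice β] {f : ι → β} (hf : iSupIndep f)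
    (s : Finset ι) (T : Set ι) (h : ∀ i ∈ s, i ∉ T) :
    Disjoint (⨆ i ∈ s, f i) (⨆ i ∈ T, f i) := by
  classical
  induction s using Finset.induction_on with
  | empty => simp
  | @insert i s his ih =>
    rw [Finset.iSup_insert]
    have ih' := ih fun j hj => h j (Finset.mem_insert_of_mem hj)
    have hiT : i ∉ T := h i (Finset.mem_insert_self i s)
    have hsup : Disjoint (f i) ((⨆ j ∈ s, f j) ⊔ ⨆ j ∈ T, f j) := by
      refine (hf i).mono_right (sup_le ?_ ?_)
      · refine iSup₂_le fun j hj => ?_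
        exact le_iSup₂ (f := fun (j : ι) (_ : j ≠ i) => f j) j
          (fun hji => his (hji ▸ hj))
      · refine iSup₂_le fun j hj => ?_
        exact le_iSup₂ (f := fun (j : ι) (_ : j ≠ i) => f j) j
          (fun hji => hiT (hji ▸ hj))
    exact ih'.disjoint_sup_left_of_disjoint_sup_right hsup

lemma nPowU_anti {k l : ℕ} (h : k ≤ l) : nPowU b n U l ≤ nPowU b n U k := by
  induction l with
  | zero => rw [Nat.le_zero.mp h]
  | succ l ih =>
    rcases Nat.eq_or_lt_of_le h with rfl | h'
    · exact le_rfl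
    · exact le_trans (nPowU_succ_le b n U l) (ih (Nat.lt_succ_iff.mp h'))

lemma keyDisj (hab : IsLieAbelian a) (H₀ : a) (Φ : Finset (Module.Dual ℂ a))
    (hΦpos : ∀ α ∈ Φ, 0 < ((α : Module.Dual ℂ a) H₀).re)
    (hwtsup : n.toSubmodule = ⨆ α ∈ Φ, wtSpace b a n α)
    (hfg : FGOverN b n U) (hafin : ∀ u : U, u ∈ aFinite b a U)
    (s : Finset (a → ℂ)) :
    ∃ K : ℕ, ∀ k, K ≤ k → Disjoint (⨆ χ ∈ s, GWU a U χ) (nPowU b n U k) := by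
  classical
  rcases Finset.eq_empty_or_nonempty Φ with hΦ | hΦ
  · subst hΦ
    have hn : n.toSubmodule = ⊥ := by rw [hwtsup]; simp
    have hP1 : nPowU b n U 1 = ⊥ := by
      refine le_bot_iff.mp (Submodule.span_le.mpr ?_)
      rintro z ⟨x, hx, u, hu, rfl⟩
      have hx0 : x = 0 := by
        have : x ∈ n.toSubmodule := hx
        rwa [hn, Submodule.mem_bot] at this
      simp [hx0]
    refine ⟨1, fun k hk => ?_⟩
    have hle : nPowU b n U k ≤ ⊥ := le_trans (nPowU_anti hk) hP1.le
    exact disjoint_bot_right.mono_right hle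
  · let c : ℝ := (Φ.image fun α => ((α : Module.Dual ℂ a) H₀).re).min' (hΦ.image _)
    have hcmem := (Φ.image fun α => ((α : Module.Dual ℂ a) H₀).re).min'_mem (hΦ.image _)
    have hcpos : 0 < c := by
      obtain ⟨α, hα, hre⟩ := Finset.mem_image.mp hcmem
      exact lt_of_lt_of_eq (hΦpos α hα) hre
    have hc : ∀ α ∈ Φ, c ≤ ((α : Module.Dual ℂ a) H₀).re :=
      fun α hα => Finset.min'_le _ _ (Finset.mem_image_of_mem _ hα)
    obtain ⟨m, hm⟩ := exists_m hab H₀ Φ hwtsup (fun α hα => (hΦpos α hα).le) hfg hafin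
    let Kf : (a → ℂ) → ℕ := fun χ => (exists_nat_gt (((χ H₀).re - m) / c)).choose
    refine ⟨s.sup Kf, fun k hk => ?_⟩
    have hP := Pk_le_Mt H₀ Φ hwtsup c hc m hm k
    have hT : ∀ χ ∈ s, χ ∉ {χ : a → ℂ | m + k * c ≤ (χ H₀).re} := by
      intro χ hχ hmem
      have h1 : ((χ H₀).re - m) / c < Kf χ := (exists_nat_gt (((χ H₀).re - m) / c)).choose_spec
      have h2 : (Kf χ : ℝ) ≤ k := Nat.cast_le.mpr (le_trans (Finset.le_sup hχ) hk)
      have h4 := (div_lt_iff₀ hcpos).mp (lt_of_lt_of_le h1 h2)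
      have hmle : (m + (k : ℝ) * c : ℝ) ≤ (χ H₀).re := hmem
      linarith
    have hdisj : Disjoint (⨆ χ ∈ s, GWU a U χ) (Mt a U H₀ (m + k * c)) :=
      disj_biSup (GWU_indep hab) s _ hT
    exact hdisj.mono_right hP

variable (b n U) in
/-- The canonical map `U → lim_k U/𝔫^kU`, as a linear map. -/
def canULin : U →ₗ[ℂ] ↥(limU b n U) where
  toFun := canU b n U
  map_add' u v := Subtype.ext (funext fun k => Submodule.Quotient.mk_add _)
  map_smul' c u := Subtype.ext (funext fun k => Submodule.Quotient.mk_smul _ c u)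

lemma canU_inj (hab : IsLieAbelian a) (H₀ : a) (Φ : Finset (Module.Dual ℂ a))
    (hΦpos : ∀ α ∈ Φ, 0 < ((α : Module.Dual ℂ a) H₀).re)
    (hwtsup : n.toSubmodule = ⨆ α ∈ Φ, wtSpace b a n α)
    (hfg : FGOverN b n U) (hafin : ∀ u : U, u ∈ aFinite b a U) :
    Function.Injective (canU b n U) := by
  have hker : ∀ u : U, canU b n U u = 0 → u = 0 := by
    intro u hu
    have hPk : ∀ k, u ∈ nPowU b n U k := by
      intro k
      have h1 : (canU b n U u).val k = 0 := by rw [hu]; rfl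
      rwa [show (canU b n U u).val k = Submodule.Quotient.mk u from rfl,
        Submodule.Quotient.mk_eq_zero] at h1
    have hu2 : u ∈ ⨆ χ : a → ℂ, GWU a U χ := F1 hab hafin Submodule.mem_top
    obtain ⟨s, hs⟩ := Submodule.mem_iSup_iff_exists_finset.mp hu2
    obtain ⟨K, hK⟩ := keyDisj hab H₀ Φ hΦpos hwtsup hfg hafin s
    exact (Submodule.mem_bot ℂ).mp ((hK K le_rfl).le_bot ⟨hs, hPk K⟩)
  intro u v huv
  have h1 : canU b n U (u - v) = 0 := by
    rw [show canU b n U (u - v) = canULin b n U (u - v) from rfl, map_sub]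
    rw [show canULin b n U u = canU b n U u from rfl,
      show canULin b n U v = canU b n U v from rfl, huv, sub_self]
  have := hker _ h1
  exact sub_eq_zero.mp this

lemma quot_eq (hab : IsLieAbelian a) (hideal : ∀ x : b, ∀ y ∈ n, ⁅x, y⁆ ∈ n)
    (hafin : ∀ u : U, u ∈ aFinite b a U) (k : ℕ) (χ : a → ℂ) :
    genWtF (fun H : a => actQk b n U hideal (H : b) k) χ
      = Submodule.map (nPowU b n U k).mkQ (GWU a U χ) := by
  haveI := hab
  letI := quotLRM b a n U hideal k
  haveI := quotLM b a n U hideal k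
  have hEnd : (fun H : a => LieModule.toEnd ℂ a (U ⧸ nPowU b n U k) H)
      = fun H : a => actQk b n U hideal (H : b) k := by
    funext H; ext q; rfl
  have hind : iSupIndep (fun χ : a → ℂ => genWtF (fun H : a => actQk b n U hideal (H : b) k) χ) := by
    have h := genWtF_indep' (a := a) (V := U ⧸ nPowU b n U k)
    rwa [hEnd] at h
  set X : (a → ℂ) → Submodule ℂ (U ⧸ nPowU b n U k) :=
    fun χ' => Submodule.map (nPowU b n U k).mkQ (GWU a U χ') with hXdef
  have hXle : ∀ χ', X χ' ≤ genWtF (fun H : a => actQk b n U hideal (H : b) k) χ' := by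
    rintro χ' q ⟨u, hu, rfl⟩
    refine genWtF_map (TU a U) _ (nPowU b n U k).mkQ (fun H v => ?_) χ' hu
    rw [Submodule.mkQ_apply, Submodule.mkQ_apply, actQk_mk]
    rfl
  have hXtop : ⨆ χ', X χ' = ⊤ := by
    have h1 : (⊤ : Submodule ℂ U) = ⨆ χ', GWU a U χ' :=
      le_antisymm (F1 hab hafin) le_top
    rw [hXdef, ← Submodule.map_iSup, ← h1, Submodule.map_top, Submodule.range_mkQ]
  refine le_antisymm ?_ (hXle χ)
  have hsplit : X χ ⊔ (⨆ χ', ⨆ _ : χ' ≠ χ, X χ') = ⊤ := by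
    refine le_antisymm le_top ?_
    rw [← hXtop]
    refine iSup_le fun χ' => ?_
    by_cases h : χ' = χ
    · subst h; exact le_sup_left
    · exact le_trans (le_iSup₂ (f := fun (χ'' : a → ℂ) (_ : χ'' ≠ χ) => X χ'') χ' h) le_sup_right
  have hY : ((⨆ χ', ⨆ _ : χ' ≠ χ, X χ') ⊓ genWtF (fun H : a => actQk b n U hideal (H : b) k) χ)
      = ⊥ := by
    have h2 : (⨆ χ', ⨆ _ : χ' ≠ χ, X χ')
        ≤ ⨆ χ', ⨆ _ : χ' ≠ χ, genWtF (fun H : a => actQk b n U hideal (H : b) k) χ' :=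
      iSup₂_mono fun χ' _ => hXle χ'
    exact disjoint_iff.mp (((hind χ).mono_right h2).symm)
  calc genWtF (fun H : a => actQk b n U hideal (H : b) k) χ
      = (X χ ⊔ ⨆ χ', ⨆ _ : χ' ≠ χ, X χ')
        ⊓ genWtF (fun H : a => actQk b n U hideal (H : b) k) χ := by
        rw [hsplit, top_inf_eq]
    _ = X χ ⊔ ((⨆ χ', ⨆ _ : χ' ≠ χ, X χ')
        ⊓ genWtF (fun H : a => actQk b n U hideal (H : b) k) χ) :=
        sup_inf_assoc_of_le _ (hXle χ)
    _ = X χ := by rw [hY, sup_bot_eq]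
    _ ≤ Submodule.map (nPowU b n U k).mkQ (GWU a U χ) := le_rfl

lemma lim_fin_mem (hab : IsLieAbelian a) (hideal : ∀ x : b, ∀ y ∈ n, ⁅x, y⁆ ∈ n)
    (f : ↥(limU b n U)) (N : Submodule ℂ ↥(limU b n U)) (hfN : f ∈ N)
    (hfd : FiniteDimensional ℂ ↥N)
    (hstab : ∀ H : a, ∀ g ∈ N, actLim b a n U hideal H g ∈ N) :
    f ∈ ⨆ χ : a → ℂ, genWtF (fun H : a => actLim b a n U hideal H) χ := by
  haveI := hab
  letI := limLRM b a n U hideal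
  haveI := limLM b a n U hideal
  let N' : LieSubmodule ℂ a ↥(limU b n U) :=
    { toSubmodule := N, lie_mem := fun {H g} hg => hstab H g hg }
  haveI : FiniteDimensional ℂ ↥N' := hfd
  have h2 := genWtF_top' (a := a) (V := ↥N') (Submodule.mem_top (x := (⟨f, hfN⟩ : ↥N')))
  exact Submodule.iSup_induction
    (motive := fun x : ↥N' =>
      (x : ↥(limU b n U)) ∈ ⨆ χ : a → ℂ, genWtF (fun H : a => actLim b a n U hideal H) χ)
    _ h2
    (fun χ x hx => Submodule.mem_iSup_of_mem χ
      (genWtF_map (fun H : a => LieModule.toEnd ℂ a ↥N' H)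
        (fun H : a => actLim b a n U hideal H)
        (N'.toSubmodule.subtype) (fun H v => rfl) χ hx))
    (by simpa using Submodule.zero_mem _)
    (fun x y hx hy => by exact Submodule.add_mem _ hx hy)

lemma gw_lim_le_range (hab : IsLieAbelian a) (hideal : ∀ x : b, ∀ y ∈ n, ⁅x, y⁆ ∈ n)
    (H₀ : a) (Φ : Finset (Module.Dual ℂ a))
    (hΦpos : ∀ α ∈ Φ, 0 < ((α : Module.Dual ℂ a) H₀).re)
    (hwtsup : n.toSubmodule = ⨆ α ∈ Φ, wtSpace b a n α)
    (hfg : FGOverN b n U) (hafin : ∀ u : U, u ∈ aFinite b a U) (χ : a → ℂ) :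
    genWtF (fun H : a => actLim b a n U hideal H) χ ≤ LinearMap.range (canULin b n U) := by
  intro f hf
  have hfk2 : ∀ k, ∃ u, u ∈ GWU a U χ ∧ (nPowU b n U k).mkQ u = f.val k := by
    intro k
    have hfk : f.val k ∈ genWtF (fun H : a => actQk b n U hideal (H : b) k) χ := by
      let ψ : ↥(limU b n U) →ₗ[ℂ] U ⧸ nPowU b n U k :=
        { toFun := fun g => g.val k
          map_add' := fun g h => rfl
          map_smul' := fun c g => rfl }
      exact genWtF_map _ _ ψ (fun H g => rfl) χ hf
    rw [quot_eq hab hideal hafin k χ] at hfk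
    exact Submodule.mem_map.mp hfk
  choose useq huseq hueq using hfk2
  obtain ⟨K, hK⟩ := keyDisj hab H₀ Φ hΦpos hwtsup hfg hafin {χ}
  have hK' : ∀ k, K ≤ k → Disjoint (GWU a U χ) (nPowU b n U k) := by
    intro k hk
    have h := hK k hk
    simpa using h
  have hstable : ∀ k, K ≤ k → useq k = useq K := by
    intro k hk
    induction k, hk using Nat.le_induction with
    | base => rfl
    | succ k hk ih =>
      have h1 : (nPowU b n U k).mkQ (useq (k + 1)) = f.val k := by
        have h2 := f.2 k
        rw [← hueq (k + 1)] at h2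
        rw [← h2, Submodule.mkQ_apply, Submodule.mkQ_apply, transU, Submodule.mapQ_apply]
        rfl
      have hdiff : useq (k + 1) - useq k ∈ nPowU b n U k := by
        rw [← Submodule.Quotient.eq]
        have := h1.trans (hueq k).symm
        rwa [Submodule.mkQ_apply, Submodule.mkQ_apply] at this
      have hmem : useq (k + 1) - useq k ∈ GWU a U χ := sub_mem (huseq (k + 1)) (huseq k)
      have h0 : useq (k + 1) - useq k = 0 :=
        (Submodule.mem_bot ℂ).mp ((hK' k hk).le_bot ⟨hmem, hdiff⟩)
      rw [sub_eq_zero] at h0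
      rw [h0]; exact ih
  refine ⟨useq K, ?_⟩
  have hup : ∀ k, K ≤ k → (Submodule.Quotient.mk (useq K) : U ⧸ nPowU b n U k) = f.val k := by
    intro k hk
    rw [← hstable k hk, ← Submodule.mkQ_apply]
    exact hueq k
  have hdown : ∀ d k, k + d = K →
      (Submodule.Quotient.mk (useq K) : U ⧸ nPowU b n U k) = f.val k := by
    intro d
    induction d with
    | zero => intro k hk; exact hup k (by omega)
    | succ d ih =>
      intro k hk
      have h1 := ih (k + 1) (by omega)
      have h2 := f.2 k
      rw [← h2, ← h1, transU, Submodule.mapQ_apply]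
      rfl
  apply Subtype.ext; funext k
  show (Submodule.Quotient.mk (useq K) : U ⧸ nPowU b n U k) = f.val k
  rcases le_or_gt K k with h | h
  · exact hup k h
  · exact hdown (K - k) k (by omega)

end Aux

open Jb in
/-- Let `𝔟 = 𝔞 ⊕ 𝔫` be as in the paper and let `U` be a `𝔟`-module,
finitely generated over `U(𝔫)`, all of whose elements are `𝔞`-finite.  Then the
canonical map `U → lim_k U/𝔫^kU` is injective and its image is exactly the set of
`𝔞`-finite elements of `lim_k U/𝔫^kU`; that is, the Jacquet module `J(U)` (the
`𝔞`-finite part of the completion) equals `U`. -/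
theorem canonical_map_injective_range_aFinite
    (b : Type*) [LieRing b] [LieAlgebra ℂ b] [FiniteDimensional ℂ b]
    (a n : LieSubalgebra ℂ b)
    (hab : IsLieAbelian a)
    (hideal : ∀ x : b, ∀ y ∈ n, ⁅x, y⁆ ∈ n)
    (hnilp : LieRing.IsNilpotent n)
    (hdisj : a.toSubmodule ⊓ n.toSubmodule = ⊥)
    (hsup : a.toSubmodule ⊔ n.toSubmodule = ⊤)
    (Φ : Finset (Module.Dual ℂ a)) (hΦ0 : (0 : Module.Dual ℂ a) ∉ Φ)
    (hwtsup : n.toSubmodule = ⨆ α ∈ Φ, wtSpace b a n α)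
    (hwtindep : iSupIndep fun α : Φ => wtSpace b a n α)
    (hH₀ : ∃ H : a, ∀ α ∈ Φ, 0 < ((α : Module.Dual ℂ a) H).re)
    (U : Type*) [AddCommGroup U] [Module ℂ U]
    [LieRingModule b U] [LieModule ℂ b U]
    (hfg : FGOverN b n U)
    (hafin : ∀ u : U, u ∈ aFinite b a U) :
    Function.Injective (canU b n U) ∧
    Set.range (canU b n U)
      = {f : limU b n U | ∃ N : Submodule ℂ (limU b n U), f ∈ N ∧
          FiniteDimensional ℂ N ∧
          ∀ H : a, ∀ g ∈ N, actLim b a n U hideal H g ∈ N} := by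
  obtain ⟨H₀, hΦpos⟩ := hH₀
  constructor
  · exact canU_inj hab H₀ Φ hΦpos hwtsup hfg hafin
  · refine Set.Subset.antisymm ?_ ?_
    · rintro g ⟨u, rfl⟩
      obtain ⟨N, huN, hfd, hstab⟩ := hafin u
      refine ⟨Submodule.map (canULin b n U) N, ⟨u, huN, rfl⟩, ?_, ?_⟩
      · haveI := hfd
        exact Module.Finite.map N (canULin b n U)
      · rintro H g ⟨v, hv, rfl⟩
        refine ⟨⁅(H : b), v⁆, hstab H v hv, ?_⟩
        apply Subtype.ext; funext k
        show (Submodule.Quotient.mk ⁅(H : b), v⁆ : U ⧸ nPowU b n U k)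
          = actQk b n U hideal (H : b) k (Submodule.Quotient.mk v)
        rw [actQk_mk]
    · rintro f ⟨N, hfN, hfd, hstab⟩
      have h1 := lim_fin_mem hab hideal f N hfN hfd hstab
      have h2 : f ∈ LinearMap.range (canULin b n U) :=
        (iSup_le fun χ => gw_lim_le_range hab hideal H₀ Φ hΦpos hwtsup hfg hafin χ) h1
      obtain ⟨u, hu⟩ := h2
      exact ⟨u, hu⟩
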